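/- (Exponential stability of a PIE from a Lyapunov certificate.) Let H := L2([a,b];ℝ^n) for reals a < b and n ∈ ℕ. Let T, A be continuous linear operators on H with T bijective, and suppose there exist α, δ > 0 and a continuous self-adjoint linear operator P on H such that ⟨v, P v⟩ ≥ α‖v‖² for all v ∈ H and ⟨v, (T* P A + A* P T) v⟩ ≤ −δ‖T v‖² for all v ∈ H. Then there exist M, ε > 0 such that every differentiable function x_f : [0,∞) → H satisfying T(x_f'(t)) = A(x_f(t)) for all t ≥ 0 obeys ‖x_f(t)‖ ≤ M ‖x_f(0)‖ e^{−εt} for all t ≥ 0. -/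

import Mathlib

open MeasureTheory
open scoped RealInnerProductSpace

set_option maxHeartbeats 1000000

noncomputable section

/-- The real Hilbert space `L2([a,b]; ℝ^n)`. -/
abbrev HL2 (a b : ℝ) (n : ℕ) :=
  Lp (EuclideanSpace ℝ (Fin n)) 2 (volume.restrict (Set.Icc a b))

/-- exponential stability of a PIE from a Lyapunov certificate.
Let `H := L2([a,b];ℝ^n)`, let `T, A` be continuous linear operators on `H` with `T`
bijective, and suppose there exist `α, δ > 0` and a continuous self-adjoint operator `P`
on `H` with `⟪v, P v⟫ ≥ α‖v‖²` and `⟪v, (T* P A + A* P T) v⟫ ≤ −δ‖T v‖²` for all `v`.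
Then there are `M, ε > 0` such that every differentiable `x_f : [0,∞) → H` with
`T(x_f'(t)) = A(x_f(t))` for all `t ≥ 0` obeys `‖x_f(t)‖ ≤ M ‖x_f(0)‖ e^{−εt}`. -/
theorem PIE_exponential_stability_from_certificate (a b : ℝ) (hab : a < b) (n : ℕ)
    (T A : HL2 a b n →L[ℝ] HL2 a b n) (hT : Function.Bijective T)
    (P : HL2 a b n →L[ℝ] HL2 a b n) (hP : IsSelfAdjoint P)
    (α δ : ℝ) (hα : 0 < α) (hδ : 0 < δ)
    (hPpos : ∀ v : HL2 a b n, α * ‖v‖ ^ 2 ≤ ⟪v, P v⟫)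
    (hdissip : ∀ v : HL2 a b n,
      ⟪v, ((ContinuousLinearMap.adjoint T ∘L P ∘L A)
          + (ContinuousLinearMap.adjoint A ∘L P ∘L T)) v⟫ ≤ -δ * ‖T v‖ ^ 2) :
    ∃ M > (0:ℝ), ∃ ε > (0:ℝ),
      ∀ xf xf' : ℝ → HL2 a b n,
        (∀ t, 0 ≤ t → HasDerivWithinAt xf (xf' t) (Set.Ici 0) t) →
        (∀ t, 0 ≤ t → T (xf' t) = A (xf t)) →
        ∀ t, 0 ≤ t → ‖xf t‖ ≤ M * ‖xf 0‖ * Real.exp (-ε * t) := by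
  classical
  have hker : LinearMap.ker (T : HL2 a b n →ₗ[ℝ] HL2 a b n) = ⊥ := LinearMap.ker_eq_bot.mpr hT.injective
  have hrange : LinearMap.range (T : HL2 a b n →ₗ[ℝ] HL2 a b n) = ⊤ :=
    LinearMap.range_eq_top.mpr hT.surjective
  set e := ContinuousLinearEquiv.ofBijective T hker hrange with he
  set S : HL2 a b n →L[ℝ] HL2 a b n := (e.symm : HL2 a b n →L[ℝ] HL2 a b n) with hS
  have hPn : (0:ℝ) < ‖P‖ + 1 := by positivity
  set c : ℝ := δ / (‖P‖ + 1) with hcdef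
  have hc : 0 < c := div_pos hδ hPn
  set K : ℝ := Real.sqrt ((‖P‖ + 1) / α) with hKdef
  have hKpos : 0 < K := Real.sqrt_pos.mpr (by positivity)
  refine ⟨(‖S‖ + 1) * (‖T‖ + 1) * K, by positivity, c / 2, by positivity, ?_⟩
  intro xf xf' hderiv heq t ht
  -- the Lyapunov function
  set f : ℝ → ℝ := fun s => ⟪T (xf s), P (T (xf s))⟫ with hfdef
  set f' : ℝ → ℝ := fun s => ⟪T (xf s), P (A (xf s))⟫ + ⟪A (xf s), P (T (xf s))⟫ with hf'def
  have hu : ∀ s, 0 ≤ s → HasDerivWithinAt (fun r => T (xf r)) (A (xf s)) (Set.Ici 0) s := by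
    intro s hs
    have := (T.hasFDerivAt (x := xf s)).comp_hasDerivWithinAt s (hderiv s hs)
    rw [heq s hs] at this
    exact this
  have hPu : ∀ s, 0 ≤ s →
      HasDerivWithinAt (fun r => P (T (xf r))) (P (A (xf s))) (Set.Ici 0) s := by
    intro s hs
    exact (P.hasFDerivAt (x := T (xf s))).comp_hasDerivWithinAt s (hu s hs)
  have hfderiv : ∀ s, 0 ≤ s → HasDerivWithinAt f (f' s) (Set.Ici 0) s := by
    intro s hs
    exact (hu s hs).inner ℝ (hPu s hs)
  have hfnonneg : ∀ s, α * ‖T (xf s)‖ ^ 2 ≤ f s := fun s => hPpos (T (xf s))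
  have hfub : ∀ s, f s ≤ (‖P‖ + 1) * ‖T (xf s)‖ ^ 2 := by
    intro s
    calc f s ≤ ‖T (xf s)‖ * ‖P (T (xf s))‖ := real_inner_le_norm _ _
      _ ≤ ‖T (xf s)‖ * (‖P‖ * ‖T (xf s)‖) :=
          mul_le_mul_of_nonneg_left (P.le_opNorm _) (norm_nonneg _)
      _ ≤ (‖P‖ + 1) * ‖T (xf s)‖ ^ 2 := by nlinarith [norm_nonneg (T (xf s))]
  have hkey : ∀ s, 0 ≤ s → f' s ≤ -c * f s := by
    intro s hs
    have h1 : f' s = ⟪xf s, ((ContinuousLinearMap.adjoint T ∘L P ∘L A)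
          + (ContinuousLinearMap.adjoint A ∘L P ∘L T)) (xf s)⟫ := by
      simp [hf'def, ContinuousLinearMap.add_apply, ContinuousLinearMap.comp_apply,
        inner_add_right, ContinuousLinearMap.adjoint_inner_right]
    have h2 : f' s ≤ -δ * ‖T (xf s)‖ ^ 2 := h1 ▸ hdissip (xf s)
    have h3 : c * f s ≤ δ * ‖T (xf s)‖ ^ 2 := by
      have := hfub s
      calc c * f s ≤ c * ((‖P‖ + 1) * ‖T (xf s)‖ ^ 2) :=
            mul_le_mul_of_nonneg_left this hc.le
        _ = δ * ‖T (xf s)‖ ^ 2 := by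
            have hcc : c * (‖P‖ + 1) = δ := div_mul_cancel₀ δ hPn.ne'
            rw [← hcc]; ring
    linarith
  -- exponential decay of f
  set g : ℝ → ℝ := fun s => f s * Real.exp (c * s) with hgdef
  have hexp : ∀ s : ℝ, HasDerivAt (fun r => Real.exp (c * r)) (c * Real.exp (c * s)) s := by
    intro s
    have h : HasDerivAt (fun r => Real.exp (c * r)) (Real.exp (c * s) * c) s := by
      simpa using ((hasDerivAt_id s).const_mul c).exp
    convert h using 1
    ring
  have hgderiv : ∀ s, 0 ≤ s →
      HasDerivWithinAt g (f' s * Real.exp (c * s) + f s * (c * Real.exp (c * s)))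
        (Set.Ici 0) s := by
    intro s hs
    exact (hfderiv s hs).mul ((hexp s).hasDerivWithinAt)
  have hanti : AntitoneOn g (Set.Ici (0:ℝ)) := by
    apply antitoneOn_of_hasDerivWithinAt_nonpos (convex_Ici 0)
      (f' := fun s => f' s * Real.exp (c * s) + f s * (c * Real.exp (c * s)))
      (fun s hs => (hgderiv s hs).continuousWithinAt)
    · intro s hs
      rw [interior_Ici] at hs ⊢
      exact (hgderiv s hs.le).mono Set.Ioi_subset_Ici_self
    · intro s hs
      rw [interior_Ici] at hs
      have h := hkey s hs.le
      have hE : 0 < Real.exp (c * s) := Real.exp_pos _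
      nlinarith
  have hgt : g t ≤ g 0 := hanti (Set.self_mem_Ici) ht ht
  have hft : f t ≤ f 0 * Real.exp (-(c * t)) := by
    rw [Real.exp_neg, ← div_eq_mul_inv, le_div_iff₀ (Real.exp_pos _)]
    simpa [hgdef] using hgt
  -- convert to norm bound on T (xf t)
  have hTxt : ‖T (xf t)‖ ≤ K * ‖T (xf 0)‖ * Real.exp (-(c / 2) * t) := by
    have hRHS : 0 ≤ K * ‖T (xf 0)‖ * Real.exp (-(c / 2) * t) := by positivity
    have hsq : ‖T (xf t)‖ ^ 2 ≤ (K * ‖T (xf 0)‖ * Real.exp (-(c / 2) * t)) ^ 2 := by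
      have h1 : α * ‖T (xf t)‖ ^ 2 ≤ f 0 * Real.exp (-(c * t)) := (hfnonneg t).trans hft
      have h2 : f 0 ≤ (‖P‖ + 1) * ‖T (xf 0)‖ ^ 2 := hfub 0
      have hE : 0 < Real.exp (-(c * t)) := Real.exp_pos _
      have hK2 : K ^ 2 = (‖P‖ + 1) / α := Real.sq_sqrt (by positivity)
      have hE2 : (Real.exp (-(c / 2) * t)) ^ 2 = Real.exp (-(c * t)) := by
        rw [← Real.exp_nat_mul]
        ring_nf
      have hexpand : (K * ‖T (xf 0)‖ * Real.exp (-(c / 2) * t)) ^ 2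
          = ((‖P‖ + 1) / α) * ‖T (xf 0)‖ ^ 2 * Real.exp (-(c * t)) := by
        rw [mul_pow, mul_pow, hK2, hE2]
      rw [hexpand]
      rw [div_mul_eq_mul_div, div_mul_eq_mul_div, le_div_iff₀ hα]
      nlinarith
    calc ‖T (xf t)‖ = Real.sqrt (‖T (xf t)‖ ^ 2) := by
          rw [Real.sqrt_sq (norm_nonneg _)]
      _ ≤ Real.sqrt ((K * ‖T (xf 0)‖ * Real.exp (-(c / 2) * t)) ^ 2) :=
          Real.sqrt_le_sqrt hsq
      _ = K * ‖T (xf 0)‖ * Real.exp (-(c / 2) * t) := Real.sqrt_sq hRHS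
  -- convert back to xf
  have hxS : ∀ v : HL2 a b n, ‖v‖ ≤ ‖S‖ * ‖T v‖ := by
    intro v
    have : S (T v) = v := ContinuousLinearEquiv.ofBijective_symm_apply_apply T hker hrange v
    calc ‖v‖ = ‖S (T v)‖ := by rw [this]
      _ ≤ ‖S‖ * ‖T v‖ := S.le_opNorm _
  have hTx0 : ‖T (xf 0)‖ ≤ ‖T‖ * ‖xf 0‖ := T.le_opNorm _
  have hE0 : 0 ≤ Real.exp (-(c / 2) * t) := (Real.exp_pos _).le
  calc ‖xf t‖ ≤ ‖S‖ * ‖T (xf t)‖ := hxS _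
    _ ≤ ‖S‖ * (K * ‖T (xf 0)‖ * Real.exp (-(c / 2) * t)) :=
        mul_le_mul_of_nonneg_left hTxt (norm_nonneg _)
    _ ≤ ‖S‖ * (K * (‖T‖ * ‖xf 0‖) * Real.exp (-(c / 2) * t)) := by
        apply mul_le_mul_of_nonneg_left _ (norm_nonneg _)
        exact mul_le_mul_of_nonneg_right (mul_le_mul_of_nonneg_left hTx0 hKpos.le) hE0
    _ ≤ (‖S‖ + 1) * (‖T‖ + 1) * K * ‖xf 0‖ * Real.exp (-(c / 2) * t) := by
        have hb : ‖S‖ * (K * ‖T‖) ≤ (‖S‖ + 1) * (‖T‖ + 1) * K := by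
          nlinarith [norm_nonneg S, norm_nonneg T, hKpos.le]
        nlinarith [norm_nonneg (xf 0), hE0, mul_nonneg (norm_nonneg (xf 0)) hE0]
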